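/- arXiv:2004.01874 — 3 statements merged into one kernel-verified Lean document; each statement's English description precedes it below -/
import Mathlib

section
/- Let a, D, μ, r be real numbers with 0 < a < r, D > 0 and μ > 0. Then the improper integral of the degradation-weighted hitting rate converges and satisfies ∫₀^∞ (a/r) · ((r − a)/√(4π D τ³)) · exp(−(r − a)²/(4 D τ)) · exp(−μ τ) dτ = (a/r) · exp(−√(μ/D) · (r − a)). (In the paper's notation, f(∞, r) = (a/r) exp(−√(μ/D)(r − a)), the fraction of molecules that ever reach the receiver.) -/
open Real MeasureTheory


open Set

lemma meas_J (s : ℝ) : Measurable (fun u : ℝ => Real.exp (-(u - s / u) ^ 2)) := by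
  fun_prop

lemma J_integrable {s : ℝ} (hs : 0 < s) :
    IntegrableOn (fun u : ℝ => Real.exp (-(u - s / u) ^ 2)) (Ioi 0) := by
  have h1 : Integrable (fun u : ℝ => Real.exp (2 * s) * Real.exp (-1 * u ^ 2)) :=
    (integrable_exp_neg_mul_sq one_pos).const_mul _
  refine h1.integrableOn.mono' ((meas_J s).aestronglyMeasurable.restrict) ?_
  filter_upwards [ae_restrict_mem measurableSet_Ioi] with u hu
  have hu0 : u ≠ 0 := ne_of_gt hu
  rw [Real.norm_eq_abs, Real.abs_exp, ← Real.exp_add]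
  apply Real.exp_le_exp.2
  have : (u - s / u) ^ 2 = u ^ 2 - 2 * s + (s / u) ^ 2 := by
    field_simp; ring
  nlinarith [sq_nonneg (s / u)]

lemma image_div (s : ℝ) (hs : 0 < s) : (fun u : ℝ => s / u) '' Ioi 0 = Ioi 0 := by
  ext x
  constructor
  · rintro ⟨u, hu, rfl⟩
    exact div_pos hs hu
  · intro hx
    exact ⟨s / x, div_pos hs hx, by field_simp⟩

lemma J_symm {s : ℝ} (hs : 0 < s) :
    ∫ u in Ioi (0:ℝ), Real.exp (-(u - s / u) ^ 2)
      = ∫ u in Ioi (0:ℝ), (s / u ^ 2) * Real.exp (-(u - s / u) ^ 2) := by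
  have hd : ∀ u ∈ Ioi (0:ℝ), HasDerivWithinAt (fun u : ℝ => s / u) (-(s / u ^ 2)) (Ioi 0) u := by
    intro u hu
    have : HasDerivAt (fun u : ℝ => s / u) (-(s / u ^ 2)) u := by
      simpa [div_eq_mul_inv, sq] using ((hasDerivAt_inv (ne_of_gt hu)).const_mul s)
    exact this.hasDerivWithinAt
  have hinj : InjOn (fun u : ℝ => s / u) (Ioi 0) := by
    intro x hx y hy h
    simp only at h
    have hx0 := ne_of_gt (mem_Ioi.mp hx)
    have hy0 := ne_of_gt (mem_Ioi.mp hy)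
    field_simp at h
    exact h.symm
  have := integral_image_eq_integral_abs_deriv_smul measurableSet_Ioi hd hinj
    (fun u : ℝ => Real.exp (-(u - s / u) ^ 2))
  rw [image_div s hs] at this
  rw [this]
  apply setIntegral_congr_fun measurableSet_Ioi
  intro u hu
  have hu0 : (u:ℝ) ≠ 0 := ne_of_gt hu
  have h2 : s / (s / u) = u := by field_simp
  simp only [smul_eq_mul, h2, abs_neg, abs_of_nonneg (by positivity : (0:ℝ) ≤ s / u ^ 2)]
  rw [show (s / u - u) ^ 2 = (u - s / u) ^ 2 by ring]

lemma image_v {s : ℝ} (hs : 0 < s) : (fun u : ℝ => u - s / u) '' Ioi 0 = univ := by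
  apply eq_univ_of_forall
  intro y
  set R := Real.sqrt (y ^ 2 + 4 * s) with hR
  have hR2 : R ^ 2 = y ^ 2 + 4 * s := Real.sq_sqrt (by positivity)
  have hRy : -y < R := by
    nlinarith [Real.sqrt_nonneg (y ^ 2 + 4 * s), abs_nonneg y, sq_abs y,
      neg_abs_le y, le_abs_self y]
  have hu : (0:ℝ) < (y + R) / 2 := by linarith
  refine ⟨(y + R) / 2, hu, ?_⟩
  have h0 : y + R ≠ 0 := by intro h; rw [h] at hu; simp at hu
  field_simp
  nlinarith

lemma v_deriv {s : ℝ} (hs : 0 < s) :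
    ∀ u ∈ Ioi (0:ℝ), HasDerivWithinAt (fun u : ℝ => u - s / u) (1 + s / u ^ 2) (Ioi 0) u := by
  intro u hu
  have h1 : HasDerivAt (fun u : ℝ => u - s / u) (1 - -(s / u ^ 2)) u := by
    exact (hasDerivAt_id u).sub (by
      simpa [div_eq_mul_inv, sq] using (hasDerivAt_inv (ne_of_gt hu)).const_mul s :
        HasDerivAt (fun u : ℝ => s / u) (-(s / u ^ 2)) u)
  simpa using h1.hasDerivWithinAt

lemma v_inj {s : ℝ} (hs : 0 < s) : InjOn (fun u : ℝ => u - s / u) (Ioi 0) := by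
  have : StrictMonoOn (fun u : ℝ => u - s / u) (Ioi 0) := by
    intro x hx y hy hxy
    simp only
    have : s / y < s / x := div_lt_div_of_pos_left hs hx hxy
    linarith
  exact this.injOn

lemma G2 {s : ℝ} (hs : 0 < s) :
    ∫ u in Ioi (0:ℝ), (1 + s / u ^ 2) * Real.exp (-(u - s / u) ^ 2) = Real.sqrt Real.pi := by
  have := integral_image_eq_integral_abs_deriv_smul measurableSet_Ioi (v_deriv hs) (v_inj hs)
    (fun x : ℝ => Real.exp (-x ^ 2))
  rw [image_v hs] at this
  have hg : ∫ x : ℝ in univ, Real.exp (-x ^ 2) = Real.sqrt Real.pi := by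
    rw [Measure.restrict_univ]
    simpa using integral_gaussian 1
  rw [← hg, this]
  apply setIntegral_congr_fun measurableSet_Ioi
  intro u hu
  simp only [smul_eq_mul]
  rw [abs_of_nonneg (by positivity : (0:ℝ) ≤ 1 + s / u ^ 2)]

lemma J_symm_integrable {s : ℝ} (hs : 0 < s) :
    IntegrableOn (fun u : ℝ => (s / u ^ 2) * Real.exp (-(u - s / u) ^ 2)) (Ioi 0) := by
  have hd : ∀ u ∈ Ioi (0:ℝ), HasDerivWithinAt (fun u : ℝ => s / u) (-(s / u ^ 2)) (Ioi 0) u := by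
    intro u hu
    exact (by simpa [div_eq_mul_inv, sq] using
      ((hasDerivAt_inv (ne_of_gt hu)).const_mul s) :
        HasDerivAt (fun u : ℝ => s / u) (-(s / u ^ 2)) u).hasDerivWithinAt
  have hinj : InjOn (fun u : ℝ => s / u) (Ioi 0) := by
    intro x hx y hy h
    simp only at h
    have hx0 := ne_of_gt (mem_Ioi.mp hx)
    have hy0 := ne_of_gt (mem_Ioi.mp hy)
    field_simp at h
    exact h.symm
  have := (integrableOn_image_iff_integrableOn_abs_deriv_smul measurableSet_Ioi hd hinj
    (fun u : ℝ => Real.exp (-(u - s / u) ^ 2))).mp (by rw [image_div s hs]; exact J_integrable hs)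
  refine this.congr_fun ?_ measurableSet_Ioi
  intro u hu
  have hu0 : (u:ℝ) ≠ 0 := ne_of_gt hu
  have h2 : s / (s / u) = u := by field_simp
  simp only [smul_eq_mul, h2, abs_neg, abs_of_nonneg (by positivity : (0:ℝ) ≤ s / u ^ 2)]
  rw [show (s / u - u) ^ 2 = (u - s / u) ^ 2 by ring]

lemma J_value {s : ℝ} (hs : 0 < s) :
    ∫ u in Ioi (0:ℝ), Real.exp (-(u - s / u) ^ 2) = Real.sqrt Real.pi / 2 := by
  have hadd : ∫ u in Ioi (0:ℝ), (1 + s / u ^ 2) * Real.exp (-(u - s / u) ^ 2)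
      = (∫ u in Ioi (0:ℝ), Real.exp (-(u - s / u) ^ 2))
        + ∫ u in Ioi (0:ℝ), (s / u ^ 2) * Real.exp (-(u - s / u) ^ 2) := by
    rw [← integral_add (J_integrable hs) (J_symm_integrable hs)]
    congr 1
    ext u
    ring
  rw [G2 hs, ← J_symm hs] at hadd
  linarith

lemma G4_value {s : ℝ} (hs : 0 < s) :
    ∫ u in Ioi (0:ℝ), Real.exp (-u ^ 2) * Real.exp (-(s ^ 2 / u ^ 2))
      = Real.sqrt Real.pi / 2 * Real.exp (-(2 * s)) := by
  have h : ∀ u ∈ Ioi (0:ℝ), Real.exp (-u ^ 2) * Real.exp (-(s ^ 2 / u ^ 2))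
      = Real.exp (-(2 * s)) * Real.exp (-(u - s / u) ^ 2) := by
    intro u hu
    have hu0 : (u:ℝ) ≠ 0 := ne_of_gt hu
    rw [← Real.exp_add, ← Real.exp_add]
    congr 1
    have : (u - s / u) ^ 2 = u ^ 2 - 2 * s + s ^ 2 / u ^ 2 := by field_simp; ring
    linarith
  rw [setIntegral_congr_fun measurableSet_Ioi h, integral_const_mul, J_value hs]
  ring

lemma G4_integrable {s : ℝ} (hs : 0 < s) :
    IntegrableOn (fun u : ℝ => Real.exp (-u ^ 2) * Real.exp (-(s ^ 2 / u ^ 2))) (Ioi 0) := by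
  have h1 : IntegrableOn (fun u : ℝ => Real.exp (-(2 * s)) * Real.exp (-(u - s / u) ^ 2)) (Ioi 0) :=
    (J_integrable hs).const_mul _
  refine h1.congr_fun ?_ measurableSet_Ioi
  intro u hu
  have hu0 : (u:ℝ) ≠ 0 := ne_of_gt hu
  simp only [← Real.exp_add]
  congr 1
  have : (u - s / u) ^ 2 = u ^ 2 - 2 * s + s ^ 2 / u ^ 2 := by field_simp; ring
  linarith

/-- For 0 < a < r, D > 0, μ > 0, the improper integral of the
degradation-weighted hitting rate converges and
∫₀^∞ (a/r)·((r−a)/√(4πDτ³))·exp(−(r−a)²/(4Dτ))·exp(−μτ) dτ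
  = (a/r)·exp(−√(μ/D)·(r−a)). -/
theorem fraction_ever_absorbed_with_degradation
    (a D μ r : ℝ) (ha : 0 < a) (har : a < r) (hD : 0 < D) (hμ : 0 < μ) :
    IntegrableOn (fun τ : ℝ =>
      (a / r) * ((r - a) / Real.sqrt (4 * Real.pi * D * τ ^ 3)) *
        Real.exp (-(r - a) ^ 2 / (4 * D * τ)) * Real.exp (-μ * τ)) (Set.Ioi 0) ∧
    (∫ τ in Set.Ioi (0 : ℝ),
      (a / r) * ((r - a) / Real.sqrt (4 * Real.pi * D * τ ^ 3)) *
        Real.exp (-(r - a) ^ 2 / (4 * D * τ)) * Real.exp (-μ * τ))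
      = (a / r) * Real.exp (-Real.sqrt (μ / D) * (r - a)) := by
  have hra : 0 < r - a := sub_pos.mpr har
  have hr : 0 < r := lt_trans ha har
  have hπ : 0 < Real.pi := Real.pi_pos
  set F : ℝ → ℝ := fun τ : ℝ =>
      (a / r) * ((r - a) / Real.sqrt (4 * Real.pi * D * τ ^ 3)) *
        Real.exp (-(r - a) ^ 2 / (4 * D * τ)) * Real.exp (-μ * τ) with hF
  set k : ℝ := (r - a) ^ 2 / (4 * D) with hk
  have hk0 : 0 < k := by positivity
  set s : ℝ := Real.sqrt (μ / D) * (r - a) / 2 with hsdef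
  have hsq : (0:ℝ) < Real.sqrt (μ / D) := Real.sqrt_pos.mpr (by positivity)
  have hs : 0 < s := by positivity
  have hs2 : s ^ 2 = μ * k := by
    rw [hsdef, hk, div_pow, mul_pow, Real.sq_sqrt (by positivity : (0:ℝ) ≤ μ / D)]
    field_simp
    ring
  have hderiv : ∀ u ∈ Ioi (0:ℝ),
      HasDerivWithinAt (fun u : ℝ => k / u ^ 2) (-(2 * k / u ^ 3)) (Ioi 0) u := by
    intro u hu
    have hu0 : (u:ℝ) ≠ 0 := ne_of_gt hu
    have h1 : HasDerivAt (fun u : ℝ => u ^ 2) (2 * u) u := by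
      simpa using hasDerivAt_pow 2 u
    have h2 := (h1.inv (pow_ne_zero 2 hu0)).const_mul k
    have h3 : HasDerivAt (fun u : ℝ => k / u ^ 2) (k * (-(2 * u) / (u ^ 2) ^ 2)) u := by
      simpa [div_eq_mul_inv] using h2
    have h4 : k * (-(2 * u) / (u ^ 2) ^ 2) = -(2 * k / u ^ 3) := by
      field_simp
    rw [h4] at h3
    exact h3.hasDerivWithinAt
  have hinj : InjOn (fun u : ℝ => k / u ^ 2) (Ioi 0) := by
    intro x hx y hy h
    simp only at h
    have hx0 : (x:ℝ) ≠ 0 := ne_of_gt hx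
    have hy0 : (y:ℝ) ≠ 0 := ne_of_gt hy
    have h1 : x ^ 2 = y ^ 2 := by
      field_simp at h
      linarith [h]
    have h3 : (x - y) * (x + y) = 0 := by nlinarith
    rcases mul_eq_zero.mp h3 with h4 | h4
    · linarith
    · exact absurd h4 (ne_of_gt (by have := mem_Ioi.mp hx; have := mem_Ioi.mp hy; linarith))
  have himg : (fun u : ℝ => k / u ^ 2) '' Ioi 0 = Ioi 0 := by
    ext τ
    constructor
    · rintro ⟨u, hu, rfl⟩
      exact mem_Ioi.mpr (div_pos hk0 (pow_pos (mem_Ioi.mp hu) 2))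
    · intro hτ
      have hτ0 : (0:ℝ) < τ := hτ
      refine ⟨Real.sqrt (k / τ), Real.sqrt_pos.mpr (div_pos hk0 hτ0), ?_⟩
      simp only
      rw [Real.sq_sqrt (by positivity : (0:ℝ) ≤ k / τ)]
      field_simp
  have key : ∀ u ∈ Ioi (0:ℝ),
      |(-(2 * k / u ^ 3))| • F (k / u ^ 2)
        = (a / r * (2 / Real.sqrt Real.pi)) * (Real.exp (-u ^ 2) * Real.exp (-(s ^ 2 / u ^ 2))) := by
    intro u hu
    have hu0 : (0:ℝ) < u := hu
    have hsqrt : Real.sqrt (4 * Real.pi * D * (k / u ^ 2) ^ 3)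
        = Real.sqrt Real.pi * (r - a) ^ 3 / (4 * D * u ^ 3) := by
      have hππ : Real.sqrt Real.pi ^ 2 = Real.pi := Real.sq_sqrt hπ.le
      rw [show 4 * Real.pi * D * (k / u ^ 2) ^ 3
          = (Real.sqrt Real.pi * (r - a) ^ 3 / (4 * D * u ^ 3)) ^ 2 by
        rw [hk, ← hππ]
        field_simp
        rw [Real.sqrt_sq (Real.sqrt_nonneg _)]]
      exact Real.sqrt_sq (by positivity)
    have e1 : -(r - a) ^ 2 / (4 * D * (k / u ^ 2)) = -u ^ 2 := by
      rw [hk]; field_simp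
    have e2 : -μ * (k / u ^ 2) = -(s ^ 2 / u ^ 2) := by
      rw [hs2]; ring
    rw [hF]
    simp only
    rw [hsqrt, e1, e2, smul_eq_mul, abs_neg,
      abs_of_nonneg (by positivity : (0:ℝ) ≤ 2 * k / u ^ 3)]
    have hsπ : Real.sqrt Real.pi ≠ 0 := ne_of_gt (Real.sqrt_pos.mpr hπ)
    rw [hk]
    field_simp
  have hint := (integrableOn_image_iff_integrableOn_abs_deriv_smul measurableSet_Ioi hderiv hinj F)
  rw [himg] at hint
  have hInt2 : IntegrableOn
      (fun u : ℝ => (a / r * (2 / Real.sqrt Real.pi))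
        * (Real.exp (-u ^ 2) * Real.exp (-(s ^ 2 / u ^ 2)))) (Ioi 0) :=
    (G4_integrable hs).const_mul _
  constructor
  · rw [hint]
    exact hInt2.congr_fun (fun u hu => (key u hu).symm) measurableSet_Ioi
  · have hval := integral_image_eq_integral_abs_deriv_smul measurableSet_Ioi hderiv hinj F
    rw [himg] at hval
    calc ∫ τ in Ioi (0:ℝ), F τ
        = ∫ u in Ioi (0:ℝ), |(-(2 * k / u ^ 3))| • F (k / u ^ 2) := hval
      _ = ∫ u in Ioi (0:ℝ), (a / r * (2 / Real.sqrt Real.pi))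
            * (Real.exp (-u ^ 2) * Real.exp (-(s ^ 2 / u ^ 2))) :=
          setIntegral_congr_fun measurableSet_Ioi key
      _ = (a / r * (2 / Real.sqrt Real.pi))
            * ∫ u in Ioi (0:ℝ), Real.exp (-u ^ 2) * Real.exp (-(s ^ 2 / u ^ 2)) :=
          integral_const_mul _ _
      _ = (a / r) * Real.exp (-Real.sqrt (μ / D) * (r - a)) := by
          rw [G4_value hs]
          have hsπ : Real.sqrt Real.pi ≠ 0 := ne_of_gt (Real.sqrt_pos.mpr hπ)
          rw [show -Real.sqrt (μ / D) * (r - a) = -(2 * s) by rw [hsdef]; ring]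
          field_simp
end

section
/- Let a, D, μ, r, t be real numbers with 0 < a < r, D > 0, μ > 0 and t > 0. Then ∫₀ᵗ (a/r) · ((r − a)/√(4π D τ³)) · exp(−(r − a)²/(4 D τ)) · exp(−μ τ) dτ = (a/(2r)) · [ exp(−√(μ/D) · (r − a)) · erfc((r − a)/√(4 D t) − √(μ t)) + exp(√(μ/D) · (r − a)) · erfc((r − a)/√(4 D t) + √(μ t)) ]. (This is the closed form of the channel impulse response f(t, r) with molecular degradation.) -/
open Real MeasureTheory
open Set Filter

/-- The complementary error function: erfc x = (2/√π) ∫ₓ^∞ exp(−u²) du. -/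
noncomputable def erfc (x : ℝ) : ℝ :=
  (2 / Real.sqrt Real.pi) * ∫ u in Set.Ioi x, Real.exp (-u ^ 2)

lemma gauss_integrable : MeasureTheory.Integrable (fun u : ℝ => Real.exp (-u ^ 2)) := by
  simpa [neg_mul, one_mul, sq] using integrable_exp_neg_mul_sq (one_pos)

lemma gauss_cont : Continuous (fun u : ℝ => Real.exp (-u ^ 2)) := by
  continuity

lemma ioi_split (x y : ℝ) (hxy : x ≤ y) :
    (∫ u in Set.Ioi x, Real.exp (-u ^ 2))
      = (∫ u in x..y, Real.exp (-u ^ 2)) + ∫ u in Set.Ioi y, Real.exp (-u ^ 2) := by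
  rw [intervalIntegral.integral_of_le hxy]
  have : Set.Ioi x = Set.Ioc x y ∪ Set.Ioi y := by
    rw [Set.Ioc_union_Ioi_eq_Ioi hxy]
  rw [this, MeasureTheory.setIntegral_union]
  · exact Set.Ioc_disjoint_Ioi le_rfl
  · exact measurableSet_Ioi
  · exact gauss_integrable.integrableOn
  · exact gauss_integrable.integrableOn

lemma erfc_eq (x : ℝ) :
    erfc x = (2 / Real.sqrt Real.pi) *
      ((∫ u in Set.Ioi (0:ℝ), Real.exp (-u ^ 2)) - ∫ u in (0:ℝ)..x, Real.exp (-u ^ 2)) := by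
  rw [erfc]
  congr 1
  rcases le_total 0 x with h | h
  · rw [ioi_split 0 x h]; ring
  · rw [ioi_split x 0 h, intervalIntegral.integral_symm]; ring

lemma erfc_hasDerivAt (x : ℝ) :
    HasDerivAt erfc (-(2 / Real.sqrt Real.pi) * Real.exp (-x ^ 2)) x := by
  have hF : HasDerivAt (fun y => ∫ u in (0:ℝ)..y, Real.exp (-u ^ 2)) (Real.exp (-x ^ 2)) x := by
    refine intervalIntegral.integral_hasDerivAt_right
      (gauss_cont.intervalIntegrable _ _) ?_ gauss_cont.continuousAt
    exact gauss_cont.stronglyMeasurable.stronglyMeasurableAtFilter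
  have h2 : HasDerivAt (fun y => (2 / Real.sqrt Real.pi) *
      ((∫ u in Set.Ioi (0:ℝ), Real.exp (-u ^ 2)) - ∫ u in (0:ℝ)..y, Real.exp (-u ^ 2)))
      (-(2 / Real.sqrt Real.pi) * Real.exp (-x ^ 2)) x := by
    have := ((hF.const_sub (∫ u in Set.Ioi (0:ℝ), Real.exp (-u ^ 2))).const_mul
      (2 / Real.sqrt Real.pi))
    rw [neg_mul, ← mul_neg]; exact this
  exact h2.congr_of_eventuallyEq (Filter.Eventually.of_forall fun y => erfc_eq y)

lemma erfc_tendsto_atTop : Filter.Tendsto erfc Filter.atTop (nhds 0) := by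
  have h : Filter.Tendsto (fun x => ∫ u in (0:ℝ)..x, Real.exp (-u ^ 2)) Filter.atTop
      (nhds (∫ u in Set.Ioi (0:ℝ), Real.exp (-u ^ 2))) :=
    MeasureTheory.intervalIntegral_tendsto_integral_Ioi 0 gauss_integrable.integrableOn
      Filter.tendsto_id
  have : Filter.Tendsto (fun x => (2 / Real.sqrt Real.pi) *
      ((∫ u in Set.Ioi (0:ℝ), Real.exp (-u ^ 2)) - ∫ u in (0:ℝ)..x, Real.exp (-u ^ 2)))
      Filter.atTop (nhds ((2 / Real.sqrt Real.pi) * 0)) := by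
    apply Filter.Tendsto.const_mul
    have := (tendsto_const_nhds (x := (∫ u in Set.Ioi (0:ℝ), Real.exp (-u ^ 2)))).sub h
    simpa using this
  simp only [mul_zero] at this
  exact this.congr fun x => (erfc_eq x).symm

noncomputable def gAux (a D μ r : ℝ) : ℝ → ℝ := fun τ =>
  (a / (2 * r)) *
    (Real.exp (-Real.sqrt (μ / D) * (r - a)) *
        erfc ((r - a) / Real.sqrt (4 * D * τ) - Real.sqrt (μ * τ)) +
      Real.exp (Real.sqrt (μ / D) * (r - a)) *
        erfc ((r - a) / Real.sqrt (4 * D * τ) + Real.sqrt (μ * τ)))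

lemma gAux_hasDerivAt (a D μ r : ℝ) (ha : 0 < a) (har : a < r) (hD : 0 < D) (hμ : 0 < μ)
    (τ : ℝ) (hτ : 0 < τ) :
    HasDerivAt (gAux a D μ r)
      ((a / r) * ((r - a) / Real.sqrt (4 * Real.pi * D * τ ^ 3)) *
        Real.exp (-(r - a) ^ 2 / (4 * D * τ)) * Real.exp (-μ * τ)) τ := by
  have hb : 0 < r - a := sub_pos.2 har
  have hr : 0 < r := ha.trans har
  have h4 : 0 < 4 * D * τ := by positivity
  have hμτ : 0 < μ * τ := by positivity
  have hu : 0 < Real.sqrt (4 * D * τ) := Real.sqrt_pos.2 h4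
  have hπ : 0 < Real.sqrt Real.pi := Real.sqrt_pos.2 Real.pi_pos
  -- derivative building blocks
  have hinner : HasDerivAt (fun x : ℝ => 4 * D * x) (4 * D) τ := by
    simpa using (hasDerivAt_id τ).const_mul (4 * D)
  have hsqrt : HasDerivAt (fun x : ℝ => Real.sqrt (4 * D * x))
      (1 / (2 * Real.sqrt (4 * D * τ)) * (4 * D)) τ :=
    (Real.hasDerivAt_sqrt h4.ne').comp τ hinner
  have hh : HasDerivAt (fun x : ℝ => (r - a) / Real.sqrt (4 * D * x))
      ((0 * Real.sqrt (4 * D * τ) - (r - a) * (1 / (2 * Real.sqrt (4 * D * τ)) * (4 * D))) /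
        (Real.sqrt (4 * D * τ)) ^ 2) τ :=
    (hasDerivAt_const τ (r - a)).div hsqrt hu.ne'
  have hsinner : HasDerivAt (fun x : ℝ => μ * x) μ τ := by
    simpa using (hasDerivAt_id τ).const_mul μ
  have hs : HasDerivAt (fun x : ℝ => Real.sqrt (μ * x))
      (1 / (2 * Real.sqrt (μ * τ)) * μ) τ :=
    (Real.hasDerivAt_sqrt hμτ.ne').comp τ hsinner
  set H' := (0 * Real.sqrt (4 * D * τ) - (r - a) * (1 / (2 * Real.sqrt (4 * D * τ)) * (4 * D))) /
        (Real.sqrt (4 * D * τ)) ^ 2 with hH'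
  set S' := 1 / (2 * Real.sqrt (μ * τ)) * μ with hS'
  have hm : HasDerivAt (fun x : ℝ => (r - a) / Real.sqrt (4 * D * x) - Real.sqrt (μ * x))
      (H' - S') τ := hh.sub hs
  have hp : HasDerivAt (fun x : ℝ => (r - a) / Real.sqrt (4 * D * x) + Real.sqrt (μ * x))
      (H' + S') τ := hh.add hs
  have e1 : HasDerivAt (fun x : ℝ => erfc ((r - a) / Real.sqrt (4 * D * x) - Real.sqrt (μ * x)))
      ((-(2 / Real.sqrt Real.pi) *
        Real.exp (-((r - a) / Real.sqrt (4 * D * τ) - Real.sqrt (μ * τ)) ^ 2)) * (H' - S')) τ :=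
    (erfc_hasDerivAt _).comp τ hm
  have e2 : HasDerivAt (fun x : ℝ => erfc ((r - a) / Real.sqrt (4 * D * x) + Real.sqrt (μ * x)))
      ((-(2 / Real.sqrt Real.pi) *
        Real.exp (-((r - a) / Real.sqrt (4 * D * τ) + Real.sqrt (μ * τ)) ^ 2)) * (H' + S')) τ :=
    (erfc_hasDerivAt _).comp τ hp
  have hg : HasDerivAt (gAux a D μ r)
      ((a / (2 * r)) *
        (Real.exp (-Real.sqrt (μ / D) * (r - a)) *
          ((-(2 / Real.sqrt Real.pi) *
            Real.exp (-((r - a) / Real.sqrt (4 * D * τ) - Real.sqrt (μ * τ)) ^ 2)) * (H' - S')) +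
         Real.exp (Real.sqrt (μ / D) * (r - a)) *
          ((-(2 / Real.sqrt Real.pi) *
            Real.exp (-((r - a) / Real.sqrt (4 * D * τ) + Real.sqrt (μ * τ)) ^ 2)) * (H' + S')))) τ :=
    ((e1.const_mul _).add (e2.const_mul _)).const_mul _
  convert hg using 1
  -- now algebra
  have hu2 : Real.sqrt (4 * D * τ) ^ 2 = 4 * D * τ := Real.sq_sqrt h4.le
  have hs2 : Real.sqrt (μ * τ) ^ 2 = μ * τ := Real.sq_sqrt hμτ.le
  have hprod : ((r - a) / Real.sqrt (4 * D * τ)) * Real.sqrt (μ * τ)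
      = (r - a) * (Real.sqrt (μ / D) / 2) := by
    have h1 : Real.sqrt (μ * τ) / Real.sqrt (4 * D * τ) = Real.sqrt (μ / D) / 2 := by
      rw [← Real.sqrt_div hμτ.le]
      have : μ * τ / (4 * D * τ) = (μ / D) / 4 := by
        field_simp
      rw [this, Real.sqrt_div (by positivity) 4,
        show (4:ℝ) = 2 ^ 2 by norm_num, Real.sqrt_sq (by norm_num)]
    rw [div_mul_eq_mul_div, mul_div_assoc, h1]
  have key1 : Real.exp (-Real.sqrt (μ / D) * (r - a)) *
      Real.exp (-((r - a) / Real.sqrt (4 * D * τ) - Real.sqrt (μ * τ)) ^ 2)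
      = Real.exp (-(r - a) ^ 2 / (4 * D * τ)) * Real.exp (-μ * τ) := by
    rw [← Real.exp_add, ← Real.exp_add]
    congr 1
    have expand : ((r - a) / Real.sqrt (4 * D * τ) - Real.sqrt (μ * τ)) ^ 2
        = ((r - a) / Real.sqrt (4 * D * τ)) ^ 2
          - 2 * (((r - a) / Real.sqrt (4 * D * τ)) * Real.sqrt (μ * τ))
          + Real.sqrt (μ * τ) ^ 2 := by ring
    rw [expand, hprod, hs2, div_pow, hu2]
    ring
  have key2 : Real.exp (Real.sqrt (μ / D) * (r - a)) *
      Real.exp (-((r - a) / Real.sqrt (4 * D * τ) + Real.sqrt (μ * τ)) ^ 2)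
      = Real.exp (-(r - a) ^ 2 / (4 * D * τ)) * Real.exp (-μ * τ) := by
    rw [← Real.exp_add, ← Real.exp_add]
    congr 1
    have expand : ((r - a) / Real.sqrt (4 * D * τ) + Real.sqrt (μ * τ)) ^ 2
        = ((r - a) / Real.sqrt (4 * D * τ)) ^ 2
          + 2 * (((r - a) / Real.sqrt (4 * D * τ)) * Real.sqrt (μ * τ))
          + Real.sqrt (μ * τ) ^ 2 := by ring
    rw [expand, hprod, hs2, div_pow, hu2]
    ring
  have hsplit : Real.sqrt (4 * Real.pi * D * τ ^ 3)
      = Real.sqrt Real.pi * (Real.sqrt (4 * D * τ) * τ) := by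
    rw [show 4 * Real.pi * D * τ ^ 3 = Real.pi * ((4 * D * τ) * τ ^ 2) by ring,
      Real.sqrt_mul Real.pi_pos.le, Real.sqrt_mul h4.le, Real.sqrt_sq hτ.le]
  calc (a / r) * ((r - a) / Real.sqrt (4 * Real.pi * D * τ ^ 3)) *
        Real.exp (-(r - a) ^ 2 / (4 * D * τ)) * Real.exp (-μ * τ)
      = (a / r) * ((r - a) / (Real.sqrt Real.pi * (Real.sqrt (4 * D * τ) * τ))) *
        Real.exp (-(r - a) ^ 2 / (4 * D * τ)) * Real.exp (-μ * τ) := by rw [hsplit]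
    _ = (a / (2 * r)) * (-(2 / Real.sqrt Real.pi)) *
        ((Real.exp (-(r - a) ^ 2 / (4 * D * τ)) * Real.exp (-μ * τ)) * (H' - S')
          + (Real.exp (-(r - a) ^ 2 / (4 * D * τ)) * Real.exp (-μ * τ)) * (H' + S')) := by
        rw [hH', hS', hu2]
        field_simp
        ring
    _ = (a / (2 * r)) *
        (Real.exp (-Real.sqrt (μ / D) * (r - a)) *
          ((-(2 / Real.sqrt Real.pi) *
            Real.exp (-((r - a) / Real.sqrt (4 * D * τ) - Real.sqrt (μ * τ)) ^ 2)) * (H' - S')) +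
         Real.exp (Real.sqrt (μ / D) * (r - a)) *
          ((-(2 / Real.sqrt Real.pi) *
            Real.exp (-((r - a) / Real.sqrt (4 * D * τ) + Real.sqrt (μ * τ)) ^ 2)) * (H' + S'))) := by
        have r1 : Real.exp (-Real.sqrt (μ / D) * (r - a)) *
            ((-(2 / Real.sqrt Real.pi) *
              Real.exp (-((r - a) / Real.sqrt (4 * D * τ) - Real.sqrt (μ * τ)) ^ 2)) * (H' - S'))
            = (-(2 / Real.sqrt Real.pi)) *
              ((Real.exp (-(r - a) ^ 2 / (4 * D * τ)) * Real.exp (-μ * τ)) * (H' - S')) := by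
          rw [← key1]; ring
        have r2 : Real.exp (Real.sqrt (μ / D) * (r - a)) *
            ((-(2 / Real.sqrt Real.pi) *
              Real.exp (-((r - a) / Real.sqrt (4 * D * τ) + Real.sqrt (μ * τ)) ^ 2)) * (H' + S'))
            = (-(2 / Real.sqrt Real.pi)) *
              ((Real.exp (-(r - a) ^ 2 / (4 * D * τ)) * Real.exp (-μ * τ)) * (H' + S')) := by
          rw [← key2]; ring
        rw [r1, r2]; ring

lemma integrand_tendsto_zero (a D μ r : ℝ) (ha : 0 < a) (har : a < r) (hD : 0 < D) (hμ : 0 < μ) :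
    Filter.Tendsto (fun τ => (a / r) * ((r - a) / Real.sqrt (4 * Real.pi * D * τ ^ 3)) *
        Real.exp (-(r - a) ^ 2 / (4 * D * τ)) * Real.exp (-μ * τ))
      (nhdsWithin 0 (Set.Ioi 0)) (nhds 0) := by
  have hb : 0 < r - a := sub_pos.2 har
  have hr : 0 < r := ha.trans har
  have hπ : 0 < Real.sqrt Real.pi := Real.sqrt_pos.2 Real.pi_pos
  set c : ℝ := (r - a) ^ 2 / (4 * D) with hc_def
  have hc : 0 < c := by positivity
  set M : ℝ := (a / r) * (r - a) * 27 / (c ^ 3 * (Real.sqrt Real.pi * Real.sqrt (4 * D))) with hM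
  apply squeeze_zero'
  · filter_upwards [self_mem_nhdsWithin] with τ (hτ : 0 < τ)
    have h4 : 0 < 4 * Real.pi * D * τ ^ 3 := by positivity
    positivity
  · filter_upwards [self_mem_nhdsWithin] with τ (hτ : 0 < τ)
    have h4 : 0 < 4 * D * τ := by positivity
    have hu : 0 < Real.sqrt (4 * D * τ) := Real.sqrt_pos.2 h4
    have hsτ : 0 < Real.sqrt τ := Real.sqrt_pos.2 hτ
    have h4D : 0 < Real.sqrt (4 * D) := Real.sqrt_pos.2 (by positivity)
    have hsplit : Real.sqrt (4 * Real.pi * D * τ ^ 3)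
        = Real.sqrt Real.pi * (Real.sqrt (4 * D) * Real.sqrt τ * τ) := by
      rw [show 4 * Real.pi * D * τ ^ 3 = Real.pi * ((4 * D) * (τ * τ ^ 2)) by ring,
        Real.sqrt_mul Real.pi_pos.le, Real.sqrt_mul (by positivity : (0:ℝ) ≤ 4 * D),
        Real.sqrt_mul hτ.le, Real.sqrt_sq hτ.le]
      ring
    -- exp bound : exp (-(c/τ)) ≤ 27 * τ^3 / c^3
    have hexp1 : Real.exp (-μ * τ) ≤ 1 := by
      rw [Real.exp_le_one_iff]; nlinarith
    have hcube : (c / (3 * τ)) ^ 3 ≤ Real.exp (c / τ) := by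
      have h1 : c / (3 * τ) ≤ Real.exp (c / (3 * τ)) := by
        have := Real.add_one_le_exp (c / (3 * τ)); linarith
      have h2 : (c / (3 * τ)) ^ 3 ≤ Real.exp (c / (3 * τ)) ^ 3 := by
        exact pow_le_pow_left₀ (by positivity) h1 3
      refine h2.trans_eq ?_
      rw [← Real.exp_nat_mul]
      congr 1
      push_cast
      field_simp
    have hexp2 : Real.exp (-(r - a) ^ 2 / (4 * D * τ)) ≤ 27 * τ ^ 3 / c ^ 3 := by
      have harg : -(r - a) ^ 2 / (4 * D * τ) = -(c / τ) := by
        rw [hc_def]; field_simp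
      have h5 : (27 * τ ^ 3 / c ^ 3)⁻¹ ≤ Real.exp (c / τ) := by
        refine le_trans (le_of_eq ?_) hcube
        rw [inv_div, div_pow]
        congr 1
        ring
      rw [harg, Real.exp_neg]
      exact (inv_le_comm₀ (Real.exp_pos _) (by positivity)).mpr h5
    calc (a / r) * ((r - a) / Real.sqrt (4 * Real.pi * D * τ ^ 3)) *
          Real.exp (-(r - a) ^ 2 / (4 * D * τ)) * Real.exp (-μ * τ)
        ≤ (a / r) * ((r - a) / Real.sqrt (4 * Real.pi * D * τ ^ 3)) *
          (27 * τ ^ 3 / c ^ 3) * 1 := by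
          have hQ : 0 ≤ (a / r) * ((r - a) / Real.sqrt (4 * Real.pi * D * τ ^ 3)) := by
            have : 0 < Real.sqrt (4 * Real.pi * D * τ ^ 3) := Real.sqrt_pos.2 (by positivity)
            positivity
          have e0 : 0 < Real.exp (-(r - a) ^ 2 / (4 * D * τ)) := Real.exp_pos _
          have h27 : (0:ℝ) ≤ 27 * τ ^ 3 / c ^ 3 := by positivity
          apply mul_le_mul (by apply mul_le_mul_of_nonneg_left hexp2 hQ) hexp1
            (Real.exp_pos _).le (by positivity)
      _ = M * (τ * Real.sqrt τ) := by
          rw [hsplit, hM]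
          set w := Real.sqrt τ with hw_def
          have hwτ : τ = w ^ 2 := (Real.sq_sqrt hτ.le).symm
          rw [hwτ]
          have hw : 0 < w := hsτ
          field_simp
  · have hcont : Continuous fun τ : ℝ => M * (τ * Real.sqrt τ) := by
      exact continuous_const.mul (continuous_id.mul Real.continuous_sqrt)
    have h0 : Filter.Tendsto (fun τ : ℝ => M * (τ * Real.sqrt τ)) (nhdsWithin 0 (Set.Ioi 0))
        (nhds (M * (0 * Real.sqrt 0))) :=
      (hcont.tendsto 0).mono_left (nhdsWithin_le_nhds (s := Set.Ioi 0))
    simpa using h0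

lemma integrand_integrable (a D μ r t : ℝ) (ha : 0 < a) (har : a < r) (hD : 0 < D)
    (hμ : 0 < μ) (ht : 0 < t) :
    IntervalIntegrable (fun τ => (a / r) * ((r - a) / Real.sqrt (4 * Real.pi * D * τ ^ 3)) *
        Real.exp (-(r - a) ^ 2 / (4 * D * τ)) * Real.exp (-μ * τ)) MeasureTheory.volume 0 t := by
  apply ContinuousOn.intervalIntegrable
  rw [Set.uIcc_of_le ht.le]
  intro τ hτ
  rcases eq_or_lt_of_le hτ.1 with h0 | h0
  · -- τ = 0
    subst h0
    have hf0 : (a / r) * ((r - a) / Real.sqrt (4 * Real.pi * D * (0:ℝ) ^ 3)) *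
        Real.exp (-(r - a) ^ 2 / (4 * D * 0)) * Real.exp (-μ * 0) = 0 := by
      norm_num
    unfold ContinuousWithinAt
    simp only []
    rw [hf0]
    have hsub : Set.Icc (0:ℝ) t ⊆ insert 0 (Set.Ioi 0) := by
      intro x hx
      rcases eq_or_lt_of_le hx.1 with h | h
      · exact Or.inl h.symm
      · exact Or.inr h
    refine Filter.Tendsto.mono_left ?_ (nhdsWithin_mono _ hsub)
    rw [nhdsWithin_insert]
    refine Filter.Tendsto.sup ?_ (integrand_tendsto_zero a D μ r ha har hD hμ)
    have := tendsto_pure_nhds (fun τ : ℝ => (a / r) *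
      ((r - a) / Real.sqrt (4 * Real.pi * D * τ ^ 3)) *
      Real.exp (-(r - a) ^ 2 / (4 * D * τ)) * Real.exp (-μ * τ)) 0
    simpa [hf0] using this
  · -- τ > 0
    apply ContinuousAt.continuousWithinAt
    have h1 : ContinuousAt (fun τ : ℝ => Real.sqrt (4 * Real.pi * D * τ ^ 3)) τ := by
      fun_prop
    have h1ne : Real.sqrt (4 * Real.pi * D * τ ^ 3) ≠ 0 :=
      (Real.sqrt_pos.2 (by positivity)).ne'
    have h2 : ContinuousAt (fun τ : ℝ => 4 * D * τ) τ := by fun_prop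
    have h2ne : 4 * D * τ ≠ 0 := by positivity
    exact ((continuousAt_const.mul (continuousAt_const.div h1 h1ne)).mul
      ((Real.continuous_exp.continuousAt).comp (continuousAt_const.div h2 h2ne))).mul
      ((Real.continuous_exp.continuousAt).comp (by fun_prop))

lemma gAux_tendsto_zero (a D μ r : ℝ) (ha : 0 < a) (har : a < r) (hD : 0 < D) (hμ : 0 < μ) :
    Filter.Tendsto (gAux a D μ r) (nhdsWithin 0 (Set.Ioi 0)) (nhds 0) := by
  have hb : 0 < r - a := sub_pos.2 har
  have hA : Filter.Tendsto (fun τ : ℝ => (r - a) / Real.sqrt (4 * D * τ))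
      (nhdsWithin 0 (Set.Ioi 0)) Filter.atTop := by
    have h1 : Filter.Tendsto (fun τ : ℝ => Real.sqrt (4 * D * τ))
        (nhdsWithin 0 (Set.Ioi 0)) (nhdsWithin 0 (Set.Ioi 0)) := by
      apply tendsto_nhdsWithin_of_tendsto_nhds_of_eventually_within
      · have hcont : Continuous fun τ : ℝ => Real.sqrt (4 * D * τ) := by fun_prop
        have := (hcont.tendsto 0).mono_left (nhdsWithin_le_nhds (s := Set.Ioi 0))
        simpa using this
      · filter_upwards [self_mem_nhdsWithin] with τ (hτ : 0 < τ)
        exact Real.sqrt_pos.2 (by positivity)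
    have h2 : Filter.Tendsto (fun x : ℝ => (r - a) * x⁻¹) (nhdsWithin 0 (Set.Ioi 0))
        Filter.atTop := tendsto_inv_nhdsGT_zero.const_mul_atTop hb
    have := h2.comp h1
    simpa [Function.comp_def, div_eq_mul_inv] using this
  have hS : Filter.Tendsto (fun τ : ℝ => Real.sqrt (μ * τ)) (nhdsWithin 0 (Set.Ioi 0))
      (nhds 0) := by
    have hcont : Continuous fun τ : ℝ => Real.sqrt (μ * τ) := by fun_prop
    have := (hcont.tendsto 0).mono_left (nhdsWithin_le_nhds (s := Set.Ioi 0))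
    simpa using this
  have hminus : Filter.Tendsto (fun τ : ℝ => (r - a) / Real.sqrt (4 * D * τ) - Real.sqrt (μ * τ))
      (nhdsWithin 0 (Set.Ioi 0)) Filter.atTop := by
    have := (hS.neg).add_atTop hA
    refine this.congr fun x => ?_
    ring
  have hplus : Filter.Tendsto (fun τ : ℝ => (r - a) / Real.sqrt (4 * D * τ) + Real.sqrt (μ * τ))
      (nhdsWithin 0 (Set.Ioi 0)) Filter.atTop := by
    have := hS.add_atTop hA
    refine this.congr fun x => ?_
    ring
  have e1 := erfc_tendsto_atTop.comp hminus
  have e2 := erfc_tendsto_atTop.comp hplus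
  have : Filter.Tendsto (gAux a D μ r) (nhdsWithin 0 (Set.Ioi 0))
      (nhds ((a / (2 * r)) * (Real.exp (-Real.sqrt (μ / D) * (r - a)) * 0 +
        Real.exp (Real.sqrt (μ / D) * (r - a)) * 0))) := by
    exact (((e1.const_mul _).add (e2.const_mul _)).const_mul _)
  simpa using this

/-- closed form of the channel impulse response with degradation:
∫₀ᵗ (a/r)·((r−a)/√(4πDτ³))·exp(−(r−a)²/(4Dτ))·exp(−μτ) dτ
 = (a/(2r))·[exp(−√(μ/D)(r−a))·erfc((r−a)/√(4Dt) − √(μt))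
            + exp(√(μ/D)(r−a))·erfc((r−a)/√(4Dt) + √(μt))]. -/
theorem cir_closed_form_with_degradation
    (a D μ r t : ℝ) (ha : 0 < a) (har : a < r) (hD : 0 < D) (hμ : 0 < μ) (ht : 0 < t) :
    (∫ τ in (0 : ℝ)..t,
      (a / r) * ((r - a) / Real.sqrt (4 * Real.pi * D * τ ^ 3)) *
        Real.exp (-(r - a) ^ 2 / (4 * D * τ)) * Real.exp (-μ * τ))
      = (a / (2 * r)) *
        (Real.exp (-Real.sqrt (μ / D) * (r - a)) *
            erfc ((r - a) / Real.sqrt (4 * D * t) - Real.sqrt (μ * t)) +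
          Real.exp (Real.sqrt (μ / D) * (r - a)) *
            erfc ((r - a) / Real.sqrt (4 * D * t) + Real.sqrt (μ * t))) := by
  have key := intervalIntegral.integral_eq_sub_of_hasDerivAt_of_tendsto
    (f := gAux a D μ r)
    (f' := fun τ => (a / r) * ((r - a) / Real.sqrt (4 * Real.pi * D * τ ^ 3)) *
      Real.exp (-(r - a) ^ 2 / (4 * D * τ)) * Real.exp (-μ * τ))
    ht (fun x hx => gAux_hasDerivAt a D μ r ha har hD hμ x hx.1)
    (integrand_integrable a D μ r t ha har hD hμ ht)
    (gAux_tendsto_zero a D μ r ha har hD hμ)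
    (((gAux_hasDerivAt a D μ r ha har hD hμ t ht).continuousAt).continuousWithinAt)
  rw [key, gAux]
  ring
end

section
/- Let a, D, t be real numbers with a ≥ 0, D > 0 and t > 0. Then the improper integral ∫ₐ^∞ erfc((z − a)/√(4 D t)) · z dz converges and equals D t + a · √(4 D t / π). (This is the key integral in the paper's computation of the transient-state expected co-channel interference E_C^Transient = 4 λ π p₁ N a (D K T_s + a √(4 D K T_s/π)), with t = K T_s.) -/
open Real MeasureTheory

open Set Filter Topology

lemma integrable_gauss : Integrable (fun u : ℝ => Real.exp (-u ^ 2)) := by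
  simpa using integrable_exp_neg_mul_sq (by norm_num : (0:ℝ) < 1)

lemma gauss_split (x : ℝ) :
    (∫ u in Set.Ioi x, Real.exp (-u ^ 2))
      = (∫ u in Set.Ioi (0:ℝ), Real.exp (-u ^ 2)) - ∫ u in (0:ℝ)..x, Real.exp (-u ^ 2) := by
  rcases le_or_gt 0 x with h | h
  · rw [intervalIntegral.integral_of_le h, eq_sub_iff_add_eq, add_comm,
      ← MeasureTheory.setIntegral_union (Set.Ioc_disjoint_Ioi le_rfl)
        measurableSet_Ioi integrable_gauss.integrableOn integrable_gauss.integrableOn,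
      Set.Ioc_union_Ioi_eq_Ioi h]
  · rw [intervalIntegral.integral_symm, intervalIntegral.integral_of_le h.le, sub_neg_eq_add,
      add_comm,
      ← MeasureTheory.setIntegral_union (Set.Ioc_disjoint_Ioi le_rfl)
        measurableSet_Ioi integrable_gauss.integrableOn integrable_gauss.integrableOn,
      Set.Ioc_union_Ioi_eq_Ioi h.le]

lemma hasDerivAt_gaussInt (x : ℝ) :
    HasDerivAt (fun y => ∫ u in Set.Ioi y, Real.exp (-u ^ 2)) (-Real.exp (-x ^ 2)) x := by
  have hc : Continuous fun u : ℝ => Real.exp (-u ^ 2) := by continuity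
  have h := intervalIntegral.integral_hasDerivAt_right
    (a := (0:ℝ)) (b := x) (f := fun u : ℝ => Real.exp (-u ^ 2))
    (hc.intervalIntegrable 0 x) (hc.stronglyMeasurableAtFilter _ _) hc.continuousAt
  have h2 := (hasDerivAt_const x (∫ u in Set.Ioi (0:ℝ), Real.exp (-u ^ 2))).fun_sub h
  simpa only [← gauss_split, zero_sub] using h2

lemma hasDerivAt_erfc (x : ℝ) :
    HasDerivAt erfc (-(2 / Real.sqrt Real.pi * Real.exp (-x ^ 2))) x := by
  have := (hasDerivAt_gaussInt x).const_mul (2 / Real.sqrt Real.pi)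
  rw [mul_neg] at this
  exact this

lemma erfc_nonneg (x : ℝ) : 0 ≤ erfc x := by
  apply mul_nonneg (by positivity)
  exact MeasureTheory.setIntegral_nonneg measurableSet_Ioi (fun u _ => (Real.exp_pos _).le)

lemma erfc_zero : erfc 0 = 1 := by
  have h : (∫ u in Set.Ioi (0:ℝ), Real.exp (-u ^ 2)) = Real.sqrt Real.pi / 2 := by
    simpa using integral_gaussian_Ioi 1
  rw [erfc, h]
  have : Real.sqrt Real.pi ≠ 0 := by positivity
  field_simp

lemma erfc_le (x : ℝ) (hx : 1 ≤ x) : erfc x ≤ (2 / Real.sqrt Real.pi) * Real.exp (-x) := by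
  have h1 : (∫ u in Set.Ioi x, Real.exp (-u ^ 2)) ≤ ∫ u in Set.Ioi x, Real.exp (-u) := by
    apply MeasureTheory.setIntegral_mono_on integrable_gauss.integrableOn
      ((exp_neg_integrableOn_Ioi x (by norm_num : (0:ℝ) < 1)).congr_fun
        (fun u _ => by norm_num) measurableSet_Ioi) measurableSet_Ioi
    intro u hu
    have hu1 : 1 ≤ u := hx.trans (le_of_lt hu)
    apply Real.exp_le_exp.2
    nlinarith
  have h2 : (∫ u in Set.Ioi x, Real.exp (-u)) = Real.exp (-x) := integral_exp_neg_Ioi x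
  rw [erfc]
  have hp : (0:ℝ) ≤ 2 / Real.sqrt Real.pi := by positivity
  nlinarith [h1, h2.le, h2.ge]

lemma tendsto_pow_mul_exp_neg_sq (n : ℕ) :
    Tendsto (fun x : ℝ => x ^ n * Real.exp (-x ^ 2)) atTop (𝓝 0) := by
  apply tendsto_of_tendsto_of_tendsto_of_le_of_le'
    (tendsto_const_nhds) (Real.tendsto_pow_mul_exp_neg_atTop_nhds_zero n)
  · filter_upwards [eventually_ge_atTop (1:ℝ)] with x hx
    positivity
  · filter_upwards [eventually_ge_atTop (1:ℝ)] with x hx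
    have : Real.exp (-x ^ 2) ≤ Real.exp (-x) := by
      apply Real.exp_le_exp.2; nlinarith
    have hxn : (0:ℝ) ≤ x ^ n := by positivity
    nlinarith [this, hxn]

lemma tendsto_pow_mul_erfc (n : ℕ) :
    Tendsto (fun x : ℝ => x ^ n * erfc x) atTop (𝓝 0) := by
  have h : Tendsto (fun x : ℝ => (2 / Real.sqrt Real.pi) * (x ^ n * Real.exp (-x)))
      atTop (𝓝 ((2 / Real.sqrt Real.pi) * 0)) :=
    (Real.tendsto_pow_mul_exp_neg_atTop_nhds_zero n).const_mul _
  rw [mul_zero] at h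
  apply tendsto_of_tendsto_of_tendsto_of_le_of_le' tendsto_const_nhds h
  · filter_upwards [eventually_ge_atTop (1:ℝ)] with x hx
    have := erfc_nonneg x; positivity
  · filter_upwards [eventually_ge_atTop (1:ℝ)] with x hx
    have h1 := erfc_le x hx
    have hxn : (0:ℝ) ≤ x ^ n := by positivity
    calc x ^ n * erfc x ≤ x ^ n * ((2 / Real.sqrt Real.pi) * Real.exp (-x)) :=
          mul_le_mul_of_nonneg_left h1 hxn
      _ = (2 / Real.sqrt Real.pi) * (x ^ n * Real.exp (-x)) := by ring

noncomputable def Kfun (x : ℝ) : ℝ :=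
  x * erfc x - (1 / Real.sqrt Real.pi) * Real.exp (-x ^ 2)

noncomputable def Hfun (x : ℝ) : ℝ :=
  (x ^ 2 / 2 - 1 / 4) * erfc x - (x / (2 * Real.sqrt Real.pi)) * Real.exp (-x ^ 2)

lemma sqrt_pi_ne : Real.sqrt Real.pi ≠ 0 := by positivity

lemma hasDerivAt_exp_neg_sq (x : ℝ) :
    HasDerivAt (fun y : ℝ => Real.exp (-y ^ 2)) (-2 * x * Real.exp (-x ^ 2)) x := by
  have h1 : HasDerivAt (fun y : ℝ => -y ^ 2) (-(2 * x)) x := by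
    simpa using ((hasDerivAt_pow 2 x)).fun_neg
  simpa [mul_comm, mul_assoc, mul_left_comm] using h1.exp

lemma hasDerivAt_Kfun (x : ℝ) : HasDerivAt Kfun (erfc x) x := by
  have h1 := (hasDerivAt_id x).mul (hasDerivAt_erfc x)
  have h2 := (hasDerivAt_exp_neg_sq x).const_mul (1 / Real.sqrt Real.pi)
  have h := h1.fun_sub h2
  refine h.congr_deriv ?_
  simp only [id]
  field_simp
  ring

lemma hasDerivAt_Hfun (x : ℝ) : HasDerivAt Hfun (x * erfc x) x := by
  have hp : HasDerivAt (fun y : ℝ => y ^ 2 / 2 - 1 / 4) x x := by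
    simpa using ((hasDerivAt_pow 2 x).div_const 2).sub_const (1/4)
  have h1 := hp.mul (hasDerivAt_erfc x)
  have h2 := ((hasDerivAt_id x).div_const (2 * Real.sqrt Real.pi)).mul (hasDerivAt_exp_neg_sq x)
  have h := h1.fun_sub h2
  refine h.congr_deriv ?_
  simp only [id]
  field_simp
  ring

lemma tendsto_Kfun : Tendsto Kfun atTop (𝓝 0) := by
  have h1 := tendsto_pow_mul_erfc 1
  have h2 := (tendsto_pow_mul_exp_neg_sq 0).const_mul (1 / Real.sqrt Real.pi)
  simp only [pow_one, pow_zero, one_mul, mul_zero] at h1 h2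
  have h := h1.sub h2
  rw [sub_zero] at h
  exact h.congr fun x => rfl

lemma tendsto_Hfun : Tendsto Hfun atTop (𝓝 0) := by
  have h1 := (tendsto_pow_mul_erfc 2).div_const 2
  have h2 := (tendsto_pow_mul_erfc 0).div_const 4
  have h3 := (tendsto_pow_mul_exp_neg_sq 1).div_const (2 * Real.sqrt Real.pi)
  simp only [pow_zero, one_mul, pow_one, zero_div] at h1 h2 h3
  have := (h1.sub h2).sub h3
  rw [show (0:ℝ) - 0 - 0 = 0 by ring] at this
  apply this.congr
  intro x
  unfold Hfun
  field_simp

lemma Kfun_zero : Kfun 0 = -(1 / Real.sqrt Real.pi) := by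
  simp [Kfun]

lemma Hfun_zero : Hfun 0 = -(1 / 4) := by
  simp [Hfun, erfc_zero]

/-- For a ≥ 0, D > 0, t > 0,
∫ₐ^∞ erfc((z−a)/√(4Dt))·z dz converges and equals D·t + a·√(4Dt/π). -/
theorem transient_cci_key_integral
    (a D t : ℝ) (ha : 0 ≤ a) (hD : 0 < D) (ht : 0 < t) :
    IntegrableOn (fun z : ℝ =>
      erfc ((z - a) / Real.sqrt (4 * D * t)) * z) (Set.Ioi a) ∧
    (∫ z in Set.Ioi a, erfc ((z - a) / Real.sqrt (4 * D * t)) * z)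
      = D * t + a * Real.sqrt (4 * D * t / Real.pi) := by
  set s := Real.sqrt (4 * D * t) with hs_def
  have h4 : (0:ℝ) < 4 * D * t := by positivity
  have hs : 0 < s := Real.sqrt_pos.2 h4
  have hs2 : s ^ 2 = 4 * D * t := Real.sq_sqrt h4.le
  set G : ℝ → ℝ := fun z => a * s * Kfun ((z - a) / s) + s ^ 2 * Hfun ((z - a) / s) with hG
  have hderiv : ∀ z : ℝ, HasDerivAt G (erfc ((z - a) / s) * z) z := by
    intro z
    have hφ : HasDerivAt (fun z : ℝ => (z - a) / s) (1 / s) z := by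
      simpa using ((hasDerivAt_id z).sub_const a).div_const s
    have h1 := ((hasDerivAt_Kfun ((z - a) / s)).comp z hφ).const_mul (a * s)
    have h2 := ((hasDerivAt_Hfun ((z - a) / s)).comp z hφ).const_mul (s ^ 2)
    have h := h1.fun_add h2
    refine h.congr_deriv ?_
    field_simp
    ring
  have hφtop : Tendsto (fun z : ℝ => (z - a) / s) atTop atTop := by
    apply Tendsto.atTop_div_const hs
    exact tendsto_atTop_add_const_right _ (-a) tendsto_id
  have hGtop : Tendsto G atTop (𝓝 0) := by
    have h1 := (tendsto_Kfun.comp hφtop).const_mul (a * s)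
    have h2 := (tendsto_Hfun.comp hφtop).const_mul (s ^ 2)
    have := h1.add h2
    simpa using this
  have hpos : ∀ z ∈ Set.Ioi a, 0 ≤ erfc ((z - a) / s) * z := by
    intro z hz
    exact mul_nonneg (erfc_nonneg _) (ha.trans (le_of_lt hz))
  have hcont : ContinuousWithinAt G (Set.Ici a) a :=
    (hderiv a).continuousAt.continuousWithinAt
  have hint : IntegrableOn (fun z : ℝ => erfc ((z - a) / s) * z) (Set.Ioi a) :=
    integrableOn_Ioi_deriv_of_nonneg hcont (fun z hz => hderiv z) hpos hGtop
  refine ⟨hint, ?_⟩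
  have hval := integral_Ioi_of_hasDerivAt_of_nonneg hcont (fun z hz => hderiv z) hpos hGtop
  rw [hval]
  have hGa : G a = a * s * Kfun 0 + s ^ 2 * Hfun 0 := by
    simp [hG]
  rw [hGa, Kfun_zero, Hfun_zero]
  have hsqrt : Real.sqrt (4 * D * t / Real.pi) = s / Real.sqrt Real.pi := by
    rw [hs_def, ← Real.sqrt_div h4.le]
  rw [hsqrt]
  field_simp
  nlinarith [hs2, Real.mul_self_sqrt Real.pi_pos.le, congrArg (fun r => r * Real.sqrt Real.pi) hs2]
end
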